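/- Let X be a reflexive Banach space and A : X → X* a pseudo-monotone operator that is locally bounded. Then A is demi-continuous, i.e., if x_n → x strongly in X then A x_n ⇀ A x weakly-* in X*. -/
import Mathlib


open Filter Topology

section
variable {X : Type*} [NormedAddCommGroup X] [NormedSpace ℝ X]

/-- Weak convergence of a sequence in a normed space. -/
def WeakConv (u : ℕ → X) (x : X) : Prop :=
  ∀ f : X →L[ℝ] ℝ, Tendsto (fun n => f (u n)) atTop (𝓝 (f x))

/-- An operator `A : X → X*` is pseudo-monotone (Brezis). -/
def PseudoMonotone (A : X → X →L[ℝ] ℝ) : Prop :=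
  ∀ (u : ℕ → X) (x : X), WeakConv u x →
    limsup (fun n => A (u n) (u n - x)) atTop ≤ 0 →
      ∀ y : X, A x (x - y) ≤ liminf (fun n => A (u n) (u n - y)) atTop

end

/-- Key identification lemma: if `u → x` strongly, `A(uₙ)(uₙ - x) → 0`,
`A(uₙ) x → d` and `A(uₙ) y → c`, then pseudo-monotonicity forces `c = A x y`. -/
lemma pm_key {X : Type*} [NormedAddCommGroup X] [NormedSpace ℝ X]
    {A : X → X →L[ℝ] ℝ} (hA : PseudoMonotone A) {u : ℕ → X} {x y : X} {c d : ℝ}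
    (hu : Tendsto u atTop (𝓝 x))
    (h0 : Tendsto (fun n => A (u n) (u n - x)) atTop (𝓝 0))
    (hx : Tendsto (fun n => A (u n) x) atTop (𝓝 d))
    (hy : Tendsto (fun n => A (u n) y) atTop (𝓝 c)) : c = A x y := by
  have hweak : WeakConv u x := fun f => ((f.continuous.tendsto x).comp hu)
  have hsup : limsup (fun n => A (u n) (u n - x)) atTop ≤ 0 := h0.limsup_eq.le
  have hlim : ∀ (w : X) (L : ℝ), Tendsto (fun n => A (u n) w) atTop (𝓝 L) →
      liminf (fun n => A (u n) (u n - w)) atTop = d - L := by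
    intro w L hw
    have : Tendsto (fun n => A (u n) (u n - w)) atTop (𝓝 (0 + d - L)) := by
      have := ((h0.add hx).sub hw)
      simpa [map_sub] using this
    rw [this.liminf_eq]; ring
  have h1 := hA u x hweak hsup 0
  rw [hlim 0 0 (by simpa using tendsto_const_nhds)] at h1
  have h2 := hA u x hweak hsup (x + x)
  rw [hlim (x + x) (d + d) (by simpa [map_add] using hx.add hx)] at h2
  have h3 := hA u x hweak hsup y
  rw [hlim y c hy] at h3
  have h4 := hA u x hweak hsup (x + x - y)
  rw [hlim (x + x - y) (d + d - c) (by simpa [map_add, map_sub] using (hx.add hx).sub hy)] at h4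
  simp only [sub_zero, map_sub, map_add] at h1 h2 h3 h4
  linarith

theorem stmt_9 {X : Type*} [NormedAddCommGroup X] [NormedSpace ℝ X]
    [CompleteSpace X]
    -- reflexivity, encoded via weak sequential compactness of bounded sequences
    (hrefl : ∀ v : ℕ → X, (∃ M : ℝ, ∀ n, ‖v n‖ ≤ M) →
      ∃ (φ : ℕ → ℕ) (z : X), StrictMono φ ∧ WeakConv (fun n => v (φ n)) z)
    (A : X → X →L[ℝ] ℝ) (hA : PseudoMonotone A)
    (hloc : ∀ x : X, ∃ ε > (0 : ℝ), ∃ M : ℝ, ∀ y : X, ‖y - x‖ < ε → ‖A y‖ ≤ M) :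
    ∀ (u : ℕ → X) (x : X), Tendsto u atTop (𝓝 x) →
      ∀ y : X, Tendsto (fun n => A (u n) y) atTop (𝓝 (A x y)) := by
  intro u x hu y
  obtain ⟨ε, hε, M, hM⟩ := hloc x
  have hsmall : ∀ᶠ n in atTop, ‖u n - x‖ < ε := by
    have := hu.eventually (Metric.ball_mem_nhds x hε)
    simpa [Metric.mem_ball, dist_eq_norm] using this
  have hMn : ∀ᶠ n in atTop, ‖A (u n)‖ ≤ M := hsmall.mono fun n hn => hM _ hn
  have hdiff : Tendsto (fun n => u n - x) atTop (𝓝 0) := by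
    simpa using hu.sub_const x
  have h0 : Tendsto (fun n => A (u n) (u n - x)) atTop (𝓝 0) := by
    refine squeeze_zero_norm' ?_ (a := fun n => M * ‖u n - x‖) ?_
    · filter_upwards [hMn] with n hn
      calc ‖A (u n) (u n - x)‖ ≤ ‖A (u n)‖ * ‖u n - x‖ := (A (u n)).le_opNorm _
        _ ≤ M * ‖u n - x‖ := by
            exact mul_le_mul_of_nonneg_right hn (norm_nonneg _)
    · simpa using (tendsto_norm_zero.comp hdiff).const_mul M
  apply tendsto_of_subseq_tendsto
  intro ns hns
  obtain ⟨N, hN⟩ := (hns.eventually hMn).exists_forall_of_atTop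
  set w : ℕ → ℕ := fun k => ns (k + N) with hw
  have hwA : ∀ k, ‖A (u (w k))‖ ≤ M := fun k => hN _ (Nat.le_add_left N k)
  have hwtop : Tendsto w atTop atTop := hns.comp (tendsto_add_atTop_nat N)
  -- extract subsequence where A (u (w k)) y converges
  have hb1 : ∀ k, A (u (w k)) y ∈ Metric.closedBall (0:ℝ) (M * ‖y‖) := by
    intro k
    simp only [Metric.mem_closedBall, dist_zero_right, Real.norm_eq_abs]
    calc |A (u (w k)) y| ≤ ‖A (u (w k))‖ * ‖y‖ := (A (u (w k))).le_opNorm _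
      _ ≤ M * ‖y‖ := mul_le_mul_of_nonneg_right (hwA k) (norm_nonneg _)
  obtain ⟨c, -, φ1, hφ1, hc⟩ := tendsto_subseq_of_bounded
    (Metric.isBounded_closedBall (x := (0:ℝ)) (r := M * ‖y‖)) hb1
  have hb2 : ∀ k, A (u (w (φ1 k))) x ∈ Metric.closedBall (0:ℝ) (M * ‖x‖) := by
    intro k
    simp only [Metric.mem_closedBall, dist_zero_right, Real.norm_eq_abs]
    calc |A (u (w (φ1 k))) x| ≤ ‖A (u (w (φ1 k)))‖ * ‖x‖ := (A _).le_opNorm _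
      _ ≤ M * ‖x‖ := mul_le_mul_of_nonneg_right (hwA _) (norm_nonneg _)
  obtain ⟨d, -, φ2, hφ2, hd⟩ := tendsto_subseq_of_bounded
    (Metric.isBounded_closedBall (x := (0:ℝ)) (r := M * ‖x‖)) hb2
  refine ⟨fun k => φ1 (φ2 k) + N, ?_⟩
  have hψ : Tendsto (fun k => w (φ1 (φ2 k))) atTop atTop :=
    hwtop.comp ((hφ1.tendsto_atTop).comp hφ2.tendsto_atTop)
  have hceq : c = A x y := by
    refine pm_key hA (u := fun k => u (w (φ1 (φ2 k)))) (d := d)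
      (hu.comp hψ) (h0.comp hψ) ?_ ?_
    · exact hd
    · exact (hc.comp hφ2.tendsto_atTop)
  have : Tendsto (fun k => A (u (w (φ1 (φ2 k)))) y) atTop (𝓝 (A x y)) := by
    rw [← hceq]; exact hc.comp hφ2.tendsto_atTop
  simpa [hw] using this
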